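/- Let H be a symmetric operator and ψ a unit vector such that E(ψ) = ⟨ψ, Hψ⟩ is not an eigenvalue of H (so H − E(ψ)I is invertible). Define d = ψ − (H − E(ψ)I)^{−1}ψ / ⟨(H − E(ψ)I)^{−1}ψ, ψ⟩. Then d lies in the tangent space, ⟨ψ, d⟩ = 0, and d solves the Newton equation ⟨(H − E(ψ)I)d, v⟩ = ⟨Hψ, v⟩ for all v with ⟨ψ, v⟩ = 0. -/

import Mathlib

open scoped RealInnerProductSpace

/-- Newton direction representation: if `E(ψ) = ⟪ψ, Hψ⟫` is not an eigenvalue of `H`, `u`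
solves `(H − E(ψ)I)u = ψ`, and `c = ⟪u, ψ⟫ ≠ 0`, then `d = ψ − c⁻¹ u` lies in the tangent
space `T_ψ𝕊` and solves the Newton equation
`⟪(H − E(ψ)I)d, v⟫ = ⟪Hψ, v⟫` for all tangent vectors `v`. -/
theorem newton_direction_representation
    {F : Type*} [NormedAddCommGroup F] [InnerProductSpace ℝ F] [FiniteDimensional ℝ F]
    (H : F →L[ℝ] F) (hH : ∀ x y : F, ⟪H x, y⟫ = ⟪x, H y⟫)
    (ψ : F) (hψ : ‖ψ‖ = 1)
    (Eψ : ℝ) (hEψ : Eψ = ⟪ψ, H ψ⟫)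
    (hnoteig : ∀ x : F, x ≠ 0 → H x ≠ Eψ • x)
    (u : F) (hu : H u - Eψ • u = ψ)
    (c : ℝ) (hc : c = ⟪u, ψ⟫) (hcne : c ≠ 0)
    (d : F) (hd : d = ψ - c⁻¹ • u) :
    ⟪ψ, d⟫ = 0 ∧ ∀ v : F, ⟪ψ, v⟫ = 0 → ⟪H d - Eψ • d, v⟫ = ⟪H ψ, v⟫ := by
  subst hd hc hEψ
  rw [real_inner_comm ψ u] at hcne
  have hψψ : ⟪ψ, ψ⟫ = (1:ℝ) := by
    rw [real_inner_self_eq_norm_sq, hψ]; norm_num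
  constructor
  · rw [inner_sub_right, inner_smul_right, real_inner_comm ψ u]
    field_simp [hψψ]
    rw [hψψ, sub_self]
  · intro v hv
    have hHu : H u = ψ + (⟪ψ, H ψ⟫ : ℝ) • u := eq_add_of_sub_eq hu
    have key : H (ψ - (⟪u, ψ⟫)⁻¹ • u) - (⟪ψ, H ψ⟫) • (ψ - (⟪u, ψ⟫)⁻¹ • u)
        = H ψ - ((⟪ψ, H ψ⟫) + (⟪u, ψ⟫)⁻¹) • ψ := by
      simp only [map_sub, map_smul, hHu]
      module
    rw [key, inner_sub_left, inner_smul_left]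
    simp [hv]
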